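/- Let n and b be natural numbers with b ≤ n, let α_0, …, α_n be rational numbers, and set P = Σ_{i=0}^n α_i P_{n,i}. Then P has degree at most n-b if and only if for every j with 0 ≤ j ≤ b-1 one has Σ_{i=j}^{n} α_i · binom(n-j, i-j) = 0, where binom denotes the ordinary binomial coefficient. -/

import Mathlib

open Polynomial Finset

/-- The binomial coefficient polynomial `C(x,k) = x(x-1)⋯(x-k+1)/k!` in `ℚ[X]`. -/
noncomputable def binomialPoly (k : ℕ) : Polynomial ℚ :=
  (k.factorial : ℚ)⁻¹ • descPochhammer ℚ k

/-- The polynomial `P_{n,i}(d) = (-1)^i · C(-d, i) · C(d+n, n-i)`. -/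
noncomputable def Pni (n i : ℕ) : Polynomial ℚ :=
  (-1 : ℚ) ^ i •
    ((binomialPoly i).comp (-Polynomial.X) *
      (binomialPoly (n - i)).comp (Polynomial.X + Polynomial.C (n : ℚ)))

noncomputable def Bn (n k : ℕ) : Polynomial ℚ :=
  (binomialPoly k).comp (Polynomial.X + Polynomial.C (n : ℚ))

lemma Bn_eq (n k : ℕ) : Bn n k = (k.factorial : ℚ)⁻¹ •
    ((descPochhammer ℚ k).comp (X + C (n:ℚ))) := by
  simp [Bn, binomialPoly, Polynomial.smul_comp]

lemma monic_aux (n k : ℕ) : ((descPochhammer ℚ k).comp (X + C (n:ℚ))).Monic :=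
  (monic_descPochhammer ℚ k).comp (monic_X_add_C _)
    (by rw [natDegree_X_add_C]; exact one_ne_zero)

lemma natDegree_aux (n k : ℕ) : ((descPochhammer ℚ k).comp (X + C (n:ℚ))).natDegree = k := by
  rw [natDegree_comp, descPochhammer_natDegree, natDegree_X_add_C, mul_one]

lemma natDegree_Bn_le (n k : ℕ) : (Bn n k).natDegree ≤ k := by
  rw [Bn_eq]
  exact (natDegree_smul_le _ _).trans (natDegree_aux n k).le

lemma coeff_Bn_self (n k : ℕ) : (Bn n k).coeff k = (k.factorial : ℚ)⁻¹ := by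
  rw [Bn_eq, coeff_smul]
  have h := (monic_aux n k).coeff_natDegree
  rw [natDegree_aux] at h
  rw [h, smul_eq_mul, mul_one]

lemma eval_binomialPoly (k d : ℕ) :
    (binomialPoly k).eval ((d:ℕ) : ℚ) = (d.choose k : ℚ) := by
  rw [binomialPoly, eval_smul, descPochhammer_eval_eq_descFactorial,
    Nat.descFactorial_eq_factorial_mul_choose]
  have hk : (k.factorial : ℚ) ≠ 0 := Nat.cast_ne_zero.mpr k.factorial_ne_zero
  push_cast
  field_simp
  rw [smul_eq_mul, one_div, inv_mul_cancel_left₀ hk]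

lemma eval_Bn (n k d : ℕ) : (Bn n k).eval (d : ℚ) = ((d + n).choose k : ℚ) := by
  rw [Bn, eval_comp]
  have e2 : ((X + C (n:ℚ))).eval (d:ℚ) = ((d+n : ℕ):ℚ) := by push_cast; simp
  rw [e2, eval_binomialPoly]

lemma alt_sum (M : ℕ) : ∀ i : ℕ,
    ∑ k ∈ range (i+1), (-1:ℚ)^k * ((M+1).choose k) = (-1)^i * (M.choose i)
  | 0 => by simp
  | (i+1) => by
    rw [Finset.sum_range_succ, alt_sum M i, Nat.choose_succ_succ' M i]
    push_cast
    ring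

lemma key_id (d n i : ℕ) (h : i ≤ n) :
    ∑ j ∈ range (i+1), (-1:ℚ)^j * ((n-j).choose (i-j)) * ((d+n).choose (n-j))
      = ((d+i-1).choose i : ℚ) * ((d+n).choose (n-i)) := by
  rcases Nat.eq_zero_or_pos i with hi | hi
  · subst hi; simp
  have step : ∀ j ∈ range (i+1),
      (-1:ℚ)^j * ((n-j).choose (i-j)) * ((d+n).choose (n-j))
        = ((d+n).choose (n-i)) * ((-1)^j * ((d+i).choose (i-j))) := by
    intro j hj
    rw [Finset.mem_range] at hj
    have hji : j ≤ i := Nat.lt_succ_iff.mp hj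
    have h1 : (n-j).choose (i-j) = (n-j).choose (n-i) := by
      have := Nat.choose_symm (n := n - j) (k := i - j) (by omega)
      rw [show n - j - (i - j) = n - i by omega] at this
      exact this.symm
    have h2 : (d+n).choose (n-j) * (n-j).choose (n-i)
        = (d+n).choose (n-i) * ((d+i).choose (i-j)) := by
      have := Nat.choose_mul (n := d + n) (k := n - j) (s := n - i) (by omega)
      rw [show d + n - (n - i) = d + i by omega, show n - j - (n - i) = i - j by omega] at this
      exact this
    rw [h1]
    have hc := congrArg (fun x : ℕ => (x : ℚ)) h2
    push_cast at hc
    linear_combination ((-1:ℚ)^j) * hc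
  rw [Finset.sum_congr rfl step, ← Finset.mul_sum]
  have reflect : ∑ j ∈ range (i+1), (-1:ℚ)^j * ((d+i).choose (i-j))
      = ∑ k ∈ range (i+1), (-1:ℚ)^(i-k) * ((d+i).choose k) := by
    rw [← Finset.sum_range_reflect (fun k => (-1:ℚ)^(i-k) * ((d+i).choose k)) (i+1)]
    apply Finset.sum_congr rfl
    intro j hj
    rw [Finset.mem_range] at hj
    rw [show i + 1 - 1 - j = i - j from by omega, show i - (i - j) = j from by omega]
  have signs : ∀ k ∈ range (i+1), (-1:ℚ)^(i-k) * ((d+i).choose k)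
      = (-1)^i * ((-1)^k * ((d+i).choose k)) := by
    intro k hk
    rw [Finset.mem_range] at hk
    have hki : k ≤ i := Nat.lt_succ_iff.mp hk
    have hx : (-1:ℚ)^(i-k) * (-1)^k = (-1)^i := by
      rw [← pow_add, Nat.sub_add_cancel hki]
    have hsq : (-1:ℚ)^k * (-1)^k = 1 := by
      rw [← pow_add, Even.neg_one_pow ⟨k, rfl⟩]
    linear_combination (((d+i).choose k : ℚ) * (-1)^k) * hx
      - ((-1:ℚ)^(i-k) * ((d+i).choose k)) * hsq
  rw [reflect, Finset.sum_congr rfl signs, ← Finset.mul_sum]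
  have hsq : (-1:ℚ)^i * (-1)^i = 1 := by
    rw [← pow_add, Even.neg_one_pow ⟨i, rfl⟩]
  obtain ⟨M, hM⟩ : ∃ M, d + i = M + 1 := ⟨d + i - 1, by omega⟩
  have hM' : d + i - 1 = M := by omega
  rw [hM', hM, alt_sum M i]
  linear_combination (((d+n).choose (n-i) : ℚ) * (M.choose i)) * hsq

lemma eval_Pni (n i d : ℕ) (h : i ≤ n) :
    (Pni n i).eval (d:ℚ) = ((d+i-1).choose i : ℚ) * ((d+n).choose (n-i)) := by
  rw [Pni, eval_smul, eval_mul, eval_comp, eval_comp]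
  have e1 : ((-X : ℚ[X])).eval (d:ℚ) = -(d:ℚ) := by simp
  have e2 : ((X + C (n:ℚ))).eval (d:ℚ) = ((d+n : ℕ):ℚ) := by push_cast; simp
  rw [e1, e2, eval_binomialPoly]
  have hsq : (-1:ℚ)^i * (-1)^i = 1 := by
    rw [← pow_add, Even.neg_one_pow ⟨i, rfl⟩]
  have hdesc : (binomialPoly i).eval (-(d:ℚ)) = (-1)^i * ((d+i-1).choose i) := by
    have ha := ascPochhammer_eval_neg_eq_descPochhammer ℚ (-(d:ℚ)) i
    rw [neg_neg] at ha
    have hval : (ascPochhammer ℚ i).eval ((d:ℕ):ℚ)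
        = ((i.factorial * ((d+i-1).choose i) : ℕ) : ℚ) := by
      rw [← ascPochhammer_eval_cast, ascPochhammer_nat_eq_descFactorial,
        Nat.descFactorial_eq_factorial_mul_choose]
    rw [hval] at ha
    rw [binomialPoly, eval_smul]
    have hk : (i.factorial : ℚ) ≠ 0 := Nat.cast_ne_zero.mpr i.factorial_ne_zero
    push_cast at ha ⊢
    rw [smul_eq_mul]
    have hE : (descPochhammer ℚ i).eval (-(d:ℚ))
        = (-1)^i * ((i.factorial : ℚ) * ((d+i-1).choose i)) := by
      linear_combination (-(-1:ℚ)^i) * ha - ((descPochhammer ℚ i).eval (-(d:ℚ))) * hsq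
    rw [hE]
    field_simp
  rw [hdesc]
  rw [smul_eq_mul]
  linear_combination ((d+i-1).choose i : ℚ) * ((d+n).choose (n-i) : ℚ) * hsq

lemma Pni_eq (n i : ℕ) (h : i ≤ n) :
    Pni n i = ∑ j ∈ range (i+1), ((-1:ℚ)^j * ((n-j).choose (i-j))) • Bn n (n-j) := by
  apply eq_of_infinite_eval_eq
  apply Set.infinite_of_injective_forall_mem (f := (Nat.cast : ℕ → ℚ)) Nat.cast_injective
  intro d
  simp only [Set.mem_setOf_eq]
  rw [eval_Pni n i d h, eval_finset_sum]
  simp only [eval_smul, smul_eq_mul, eval_Bn]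
  rw [← key_id d n i h]

theorem Pni_degree_le_iff' (n b : ℕ) (hb : b ≤ n) (α : ℕ → ℚ) :
    (∑ i ∈ Finset.range (n + 1), α i • Pni n i).degree ≤ ((n - b : ℕ) : WithBot ℕ) ↔
    ∀ j < b, ∑ i ∈ Finset.Icc j n, α i * ((n - j).choose (i - j) : ℚ) = 0 := by
  set S : ℕ → ℚ := fun j => ∑ i ∈ Finset.Icc j n, α i * ((n - j).choose (i - j) : ℚ) with hS
  have hP : ∑ i ∈ Finset.range (n + 1), α i • Pni n i
      = ∑ j ∈ Finset.range (n + 1), ((-1:ℚ)^j * S j) • Bn n (n-j) := by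
    have h1 : ∀ i ∈ Finset.range (n+1), α i • Pni n i
        = ∑ j ∈ range (i+1), (α i * ((-1:ℚ)^j * ((n-j).choose (i-j)))) • Bn n (n-j) := by
      intro i hi
      rw [Finset.mem_range] at hi
      rw [Pni_eq n i (by omega), Finset.smul_sum]
      simp_rw [smul_smul]
    rw [Finset.sum_congr rfl h1]
    rw [Finset.sum_comm' (t' := Finset.range (n+1)) (s' := fun j => Finset.Icc j n)
      (by intro i j; simp only [Finset.mem_range, Finset.mem_Icc]; omega)]
    apply Finset.sum_congr rfl
    intro j _
    rw [← Finset.sum_smul]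
    congr 1
    rw [Finset.mul_sum]
    apply Finset.sum_congr rfl
    intro i _
    ring
  rw [hP]
  constructor
  · intro hdeg j hjb
    induction j using Nat.strong_induction_on with
    | _ j IH =>
      have hjn : j ≤ n := le_trans (le_of_lt hjb) hb
      have hcoeff : (∑ k ∈ Finset.range (n + 1), ((-1:ℚ)^k * S k) • Bn n (n-k)).coeff (n-j) = 0 := by
        apply coeff_eq_zero_of_degree_lt
        refine lt_of_le_of_lt hdeg ?_
        exact_mod_cast Nat.cast_lt.mpr (by omega : n - b < n - j)
      rw [finset_sum_coeff] at hcoeff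
      simp_rw [coeff_smul, smul_eq_mul] at hcoeff
      rw [Finset.sum_eq_single j (fun k hk hkj => ?_) (fun hj => absurd (Finset.mem_range.mpr (by omega)) hj)] at hcoeff
      · rw [coeff_Bn_self] at hcoeff
        have h1 : ((-1:ℚ)^j) ≠ 0 := by positivity
        have h2 : (((n-j).factorial : ℚ))⁻¹ ≠ 0 :=
          inv_ne_zero (Nat.cast_ne_zero.mpr (n-j).factorial_ne_zero)
        rcases mul_eq_zero.mp hcoeff with h | h
        · rcases mul_eq_zero.mp h with h' | h'
          · exact absurd h' h1
          · exact h'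
        · exact absurd h h2
      · rw [Finset.mem_range] at hk
        rcases lt_or_gt_of_ne hkj with hlt | hgt
        · rw [show S k = 0 from IH k hlt (by omega), mul_zero, zero_mul]
        · have : (Bn n (n-k)).coeff (n-j) = 0 := by
            apply coeff_eq_zero_of_natDegree_lt
            exact lt_of_le_of_lt (natDegree_Bn_le n (n-k)) (by omega)
          rw [this, mul_zero]
  · intro h
    refine le_trans (degree_sum_le _ _) ?_
    apply Finset.sup_le
    intro j hj
    rw [Finset.mem_range] at hj
    by_cases hjb : j < b
    · rw [show S j = 0 from h j hjb, mul_zero, zero_smul, degree_zero]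
      exact bot_le
    · refine le_trans (degree_smul_le _ _) (le_trans (degree_le_natDegree) ?_)
      have h1 : (Bn n (n-j)).natDegree ≤ n - b := le_trans (natDegree_Bn_le n (n-j)) (by omega)
      exact_mod_cast Nat.cast_le.mpr h1
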